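/- A_Λ and B_Γ are jointly measurable if and only if there exists a unit vector φ ∈ C^d ⊗ C^d such that ⟨φ, (A(−j)⊗id)φ⟩ = Λ(j) and ⟨φ, (B(−k)⊗id)φ⟩ = Γ(k) for all j, k ∈ Z_d. -/

import Mathlib

open Matrix Kronecker Finset
open scoped ComplexOrder

/-- ω = e^{2πi/d} -/
noncomputable def ww (d : ℕ) : ℂ := Complex.exp (2 * Real.pi * Complex.I / d)

/-- shift unitary U_x φ_k = φ_{k+x} -/
noncomputable def Um (d : ℕ) (x : ZMod d) : Matrix (ZMod d) (ZMod d) ℂ :=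
  fun i j => if i = j + x then 1 else 0

/-- modulation unitary V_y φ_k = ω^{yk} φ_k -/
noncomputable def Vm (d : ℕ) (y : ZMod d) : Matrix (ZMod d) (ZMod d) ℂ :=
  Matrix.diagonal fun i => ww d ^ (y * i).val

/-- finite Fourier transform F φ_k = (1/√d) Σ_h ω^{-hk} φ_h -/
noncomputable def Fm (d : ℕ) : Matrix (ZMod d) (ZMod d) ℂ :=
  fun i j => (1 / Real.sqrt d : ℂ) * (ww d)⁻¹ ^ (i * j).val

/-- the standard orthonormal basis vector φ_k -/
noncomputable def phiV (d : ℕ) (k : ZMod d) : ZMod d → ℂ := Pi.single k 1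

/-- ψ_k = F* φ_k -/
noncomputable def psiV (d : ℕ) [NeZero d] (k : ZMod d) : ZMod d → ℂ :=
  (Fm d)ᴴ.mulVec (phiV d k)

/-- A(j) = |φ_j⟩⟨φ_j| -/
noncomputable def Aob (d : ℕ) (j : ZMod d) : Matrix (ZMod d) (ZMod d) ℂ :=
  vecMulVec (phiV d j) (star (phiV d j))

/-- B(k) = |ψ_k⟩⟨ψ_k| -/
noncomputable def Bob (d : ℕ) [NeZero d] (k : ZMod d) : Matrix (ZMod d) (ZMod d) ℂ :=
  vecMulVec (psiV d k) (star (psiV d k))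

noncomputable def chi (d : ℕ) (a : ZMod d) : ℂ := ww d ^ a.val

lemma ww_pow (d : ℕ) (n : ℕ) : ww d ^ n = Complex.exp (n * (2 * Real.pi * Complex.I / d)) := by
  rw [ww, Complex.exp_nat_mul]

lemma ww_pow_d (d : ℕ) [NeZero d] : ww d ^ d = 1 := by
  rw [ww_pow]
  have hd : (d : ℂ) ≠ 0 := Nat.cast_ne_zero.mpr (NeZero.ne d)
  have : (d : ℂ) * (2 * Real.pi * Complex.I / d) = 2 * Real.pi * Complex.I := by
    field_simp
  rw [this, Complex.exp_two_pi_mul_I]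

lemma ww_pow_mod (d : ℕ) [NeZero d] (m : ℕ) : ww d ^ (m % d) = ww d ^ m := by
  conv_rhs => rw [← Nat.div_add_mod m d]
  rw [pow_add, pow_mul, ww_pow_d, one_pow, one_mul]

lemma chi_add (d : ℕ) [NeZero d] (a b : ZMod d) : chi d (a + b) = chi d a * chi d b := by
  rw [chi, chi, chi, ← pow_add, ZMod.val_add, ww_pow_mod]

lemma chi_zero (d : ℕ) : chi d 0 = 1 := by
  simp [chi, ZMod.val_zero]

lemma ww_ne_zero (d : ℕ) : ww d ≠ 0 := Complex.exp_ne_zero _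

lemma chi_ne_zero (d : ℕ) (a : ZMod d) : chi d a ≠ 0 := pow_ne_zero _ (ww_ne_zero d)

lemma chi_neg (d : ℕ) [NeZero d] (a : ZMod d) : chi d (-a) = (chi d a)⁻¹ := by
  have h : chi d a * chi d (-a) = 1 := by
    rw [← chi_add, add_neg_cancel, chi_zero]
  field_simp [chi_ne_zero]
  linear_combination h

lemma star_ww (d : ℕ) : star (ww d) = (ww d)⁻¹ := by
  rw [ww, Complex.star_def, ← Complex.exp_conj, ← Complex.exp_neg]
  congr 1
  simp only [map_div₀, _root_.map_mul, Complex.conj_I, Complex.conj_ofReal, map_ofNat, map_natCast]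
  ring

lemma star_chi (d : ℕ) [NeZero d] (a : ZMod d) : star (chi d a) = chi d (-a) := by
  rw [chi, star_pow, star_ww, chi_neg, chi, inv_pow]

lemma chi_one_ne_one (d : ℕ) [NeZero d] (t : ZMod d) (ht : t ≠ 0) : chi d t ≠ 1 := by
  intro h
  have hv : 0 < t.val := by
    rcases Nat.pos_of_ne_zero (fun h0 => ht (by rwa [← ZMod.val_eq_zero])) with h'
    exact h'
  have hvd : t.val < d := ZMod.val_lt t
  rw [chi, ww_pow, Complex.exp_eq_one_iff] at h
  obtain ⟨n, hn⟩ := h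
  have hd : (d : ℂ) ≠ 0 := Nat.cast_ne_zero.mpr (NeZero.ne d)
  have hI : (2 * (Real.pi : ℂ) * Complex.I) ≠ 0 := by
    simp [Complex.I_ne_zero, Real.pi_ne_zero, Complex.ofReal_ne_zero]
  have key : (t.val : ℂ) = n * d := by
    have hn2 : (t.val : ℂ) * (2 * ↑Real.pi * Complex.I) / d = n * (2 * ↑Real.pi * Complex.I) := by
      rw [← hn]; ring
    rw [div_eq_iff hd] at hn2
    have hn' : (t.val : ℂ) * (2 * ↑Real.pi * Complex.I) = (n * d) * (2 * ↑Real.pi * Complex.I) := by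
      linear_combination hn2
    exact mul_right_cancel₀ hI hn' 
  have : (t.val : ℤ) = n * d := by exact_mod_cast key
  have hdvd : (d : ℤ) ∣ (t.val : ℤ) := ⟨n, by linarith [this]⟩
  have hdvd' : d ∣ t.val := Int.ofNat_dvd.mp (by exact_mod_cast hdvd)
  have := Nat.le_of_dvd hv hdvd'
  omega

lemma sum_chi (d : ℕ) [NeZero d] (t : ZMod d) :
    ∑ i : ZMod d, chi d (i * t) = if t = 0 then (d : ℂ) else 0 := by
  by_cases ht : t = 0
  · simp [ht, chi_zero, ZMod.card]
  · simp only [ht, if_false]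
    have hshift : ∑ i : ZMod d, chi d (i * t) = (∑ i : ZMod d, chi d (i * t)) * chi d t := by
      calc ∑ i : ZMod d, chi d (i * t) = ∑ i : ZMod d, chi d ((i + 1) * t) :=
            (Fintype.sum_equiv (Equiv.addRight (1 : ZMod d)) _ _ (fun i => rfl)).symm
        _ = (∑ i : ZMod d, chi d (i * t)) * chi d t := by
            rw [Finset.sum_mul]
            exact Finset.sum_congr rfl fun i _ => by rw [add_mul, one_mul, chi_add]
    have h2 : (∑ i : ZMod d, chi d (i * t)) * (chi d t - 1) = 0 := by
      linear_combination -hshift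
    rcases mul_eq_zero.mp h2 with h | h
    · exact h
    · exact absurd (by linear_combination h) (chi_one_ne_one d t ht)

lemma phiV_apply (d : ℕ) (k a : ZMod d) : phiV d k a = if a = k then 1 else 0 := by
  simp [phiV, Pi.single_apply]

lemma Aob_apply (d : ℕ) (j a b : ZMod d) :
    Aob d j a b = (if a = j then 1 else 0) * (if b = j then 1 else 0) := by
  simp [Aob, vecMulVec_apply, phiV_apply, apply_ite (star : ℂ → ℂ)]

lemma psiV_apply (d : ℕ) [NeZero d] (k h : ZMod d) :
    psiV d k h = (1 / Real.sqrt d : ℂ) * chi d (k * h) := by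
  simp only [psiV, mulVec, dotProduct, conjTranspose_apply, phiV_apply, mul_ite, mul_one,
    mul_zero, Finset.sum_ite_eq', Finset.mem_univ, if_true]
  rw [Fm]
  rw [star_mul', star_pow, star_inv₀, star_ww, inv_inv]
  have h1 : star ((1:ℂ) / (Real.sqrt d : ℂ)) = (1:ℂ) / (Real.sqrt d : ℂ) := by
    simp [Complex.star_def, map_div₀, Complex.conj_ofReal]
  rw [h1]
  rfl

lemma sqrtd_mul_sqrtd (d : ℕ) : ((Real.sqrt d : ℂ)) * ((Real.sqrt d : ℂ)) = (d : ℂ) := by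
  rw [← Complex.ofReal_mul, Real.mul_self_sqrt (Nat.cast_nonneg d)]
  norm_cast

lemma Bob_apply (d : ℕ) [NeZero d] (k a b : ZMod d) :
    Bob d k a b = (1 / (d : ℂ)) * chi d (k * (a - b)) := by
  have hd : (Real.sqrt d : ℂ) ≠ 0 := by
    have : (0:ℝ) < Real.sqrt d := Real.sqrt_pos.mpr (by exact_mod_cast Nat.pos_of_ne_zero (NeZero.ne d))
    exact_mod_cast Complex.ofReal_ne_zero.mpr (ne_of_gt this)
  rw [Bob, vecMulVec_apply, Pi.star_apply, psiV_apply, psiV_apply, star_mul', star_chi]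
  have h1 : star ((1 : ℂ) / (Real.sqrt d : ℂ)) = (1 : ℂ) / (Real.sqrt d : ℂ) := by
    simp [Complex.star_def, map_div₀, Complex.conj_ofReal]
  rw [h1]
  have h2 : chi d (k * a) * chi d (-(k * b)) = chi d (k * (a - b)) := by
    rw [← chi_add]; congr 1; ring
  have h3 : ((1:ℂ)/(d:ℂ)) = ((1:ℂ)/(Real.sqrt d : ℂ)) * ((1:ℂ)/(Real.sqrt d : ℂ)) := by
    rw [div_mul_div_comm, one_mul, sqrtd_mul_sqrtd]
  rw [h3]
  linear_combination (((1:ℂ)/(Real.sqrt d : ℂ)) * ((1:ℂ)/(Real.sqrt d : ℂ))) * h2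

noncomputable def rho (d : ℕ) [NeZero d] (φ : ZMod d × ZMod d → ℂ) : Matrix (ZMod d) (ZMod d) ℂ :=
  fun a b => ∑ c : ZMod d, φ (a,c) * star (φ (b,c))

lemma bridgeN (d : ℕ) [NeZero d] (φ : ZMod d × ZMod d → ℂ) :
    star φ ⬝ᵥ φ = ∑ a : ZMod d, rho d φ a a := by
  simp only [dotProduct, Pi.star_apply, Fintype.sum_prod_type, rho]
  exact Finset.sum_congr rfl fun a _ => Finset.sum_congr rfl fun c _ => mul_comm _ _

lemma bridgeM (d : ℕ) [NeZero d] (M : Matrix (ZMod d) (ZMod d) ℂ) (φ : ZMod d × ZMod d → ℂ) :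
    star φ ⬝ᵥ ((M ⊗ₖ (1 : Matrix (ZMod d) (ZMod d) ℂ)) *ᵥ φ)
      = ∑ a : ZMod d, ∑ b : ZMod d, M a b * rho d φ b a := by
  simp only [dotProduct, mulVec, Fintype.sum_prod_type, Pi.star_apply, kroneckerMap_apply,
    Matrix.one_apply, mul_ite, mul_one, mul_zero, ite_mul, zero_mul, Finset.sum_ite_eq,
    Finset.mem_univ, if_true, rho]
  simp only [Finset.mul_sum]
  refine Finset.sum_congr rfl fun a _ => ?_
  rw [Finset.sum_comm]
  exact Finset.sum_congr rfl fun b _ => Finset.sum_congr rfl fun c _ => by ring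

lemma rho_star (d : ℕ) [NeZero d] (φ : ZMod d × ZMod d → ℂ) (a b : ZMod d) :
    star (rho d φ a b) = rho d φ b a := by
  simp only [rho, star_sum, star_mul', star_star]
  exact Finset.sum_congr rfl fun c _ => mul_comm _ _

lemma star_one_div_d (d : ℕ) : star ((1:ℂ)/(d:ℂ)) = (1:ℂ)/(d:ℂ) := by
  simp [Complex.star_def, map_div₀]

lemma one_div_d_nonneg (d : ℕ) : (0:ℂ) ≤ (1:ℂ)/(d:ℂ) := by
  have : ((1/(d:ℝ) : ℝ) : ℂ) = (1:ℂ)/(d:ℂ) := by push_cast; ring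
  rw [← this]
  rw [Complex.zero_le_real]
  positivity

noncomputable def Cme (d : ℕ) [NeZero d] (φ : ZMod d × ZMod d → ℂ) (j k : ZMod d) :
    Matrix (ZMod d) (ZMod d) ℂ :=
  fun a b => (1/(d:ℂ)) * chi d (k*(a-b)) * rho d φ (a-j) (b-j)

lemma Cme_herm (d : ℕ) [NeZero d] (φ : ZMod d × ZMod d → ℂ) (j k : ZMod d) :
    (Cme d φ j k).IsHermitian := by
  ext a b
  simp only [conjTranspose_apply, Cme]
  rw [star_mul', star_mul', rho_star, star_chi, star_one_div_d]
  have h2 : -(k * (b-a)) = k * (a-b) := by ring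
  rw [h2]

lemma Cme_quad (d : ℕ) [NeZero d] (φ : ZMod d × ZMod d → ℂ) (j k : ZMod d) (x : ZMod d → ℂ) :
    star x ⬝ᵥ ((Cme d φ j k) *ᵥ x)
      = (1/(d:ℂ)) * ∑ c : ZMod d,
          (∑ m : ZMod d, (chi d (k*(m+j)) * star (x (m+j))) * φ (m,c)) *
          star (∑ m : ZMod d, (chi d (k*(m+j)) * star (x (m+j))) * φ (m,c)) := by
  have step1 : star x ⬝ᵥ ((Cme d φ j k) *ᵥ x)
      = ∑ a : ZMod d, ∑ b : ZMod d,
          (1/(d:ℂ)) * chi d (k*(a-b)) * rho d φ (a-j) (b-j) * (star (x a) * x b) := by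
    simp only [dotProduct, mulVec, Pi.star_apply, Finset.mul_sum, Cme]
    exact Finset.sum_congr rfl fun a _ => Finset.sum_congr rfl fun b _ => by ring
  rw [step1]
  have step2 : ∀ (f : ZMod d → ℂ), ∑ a : ZMod d, f a = ∑ m : ZMod d, f (m + j) :=
    fun f => (Fintype.sum_equiv (Equiv.addRight j) (fun m => f (m + j)) f (fun m => rfl)).symm
  rw [step2]
  rw [Finset.sum_congr rfl (fun m _ => step2 (fun b => (1/(d:ℂ)) * chi d (k*((m+j)-b)) * rho d φ ((m+j)-j) (b-j) * (star (x (m+j)) * x b)))]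
  -- now sums over m n
  rw [Finset.mul_sum]
  have expand : ∀ c : ZMod d,
      (∑ m : ZMod d, (chi d (k*(m+j)) * star (x (m+j))) * φ (m,c)) *
        star (∑ n : ZMod d, (chi d (k*(n+j)) * star (x (n+j))) * φ (n,c))
      = ∑ m : ZMod d, ∑ n : ZMod d,
          ((chi d (k*(m+j)) * star (x (m+j))) * φ (m,c)) *
          ((chi d (-(k*(n+j))) * x (n+j)) * star (φ (n,c))) := by
    intro c
    rw [star_sum, Finset.sum_mul_sum]
    refine Finset.sum_congr rfl fun m _ => Finset.sum_congr rfl fun n _ => ?_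
    rw [star_mul', star_mul', star_chi, star_star]
  simp only [expand, Finset.mul_sum, add_sub_cancel_right]
  conv_rhs => rw [Finset.sum_comm]
  refine Finset.sum_congr rfl fun m _ => ?_
  conv_rhs => rw [Finset.sum_comm]
  refine Finset.sum_congr rfl fun n _ => ?_
  rw [rho, Finset.mul_sum, Finset.sum_mul]
  refine Finset.sum_congr rfl fun c _ => ?_
  have hx : chi d (k*(m+j)) * chi d (-(k*(n+j))) = chi d (k*((m+j)-(n+j))) := by
    rw [← chi_add]; congr 1; ring
  linear_combination (-(1/(d:ℂ)) * φ (m,c) * star (φ (n,c)) * star (x (m+j)) * x (n+j)) * hx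

lemma Cme_posSemidef (d : ℕ) [NeZero d] (φ : ZMod d × ZMod d → ℂ) (j k : ZMod d) :
    (Cme d φ j k).PosSemidef := by
  refine .of_dotProduct_mulVec_nonneg (Cme_herm d φ j k) fun x => ?_
  rw [Cme_quad]
  refine mul_nonneg (one_div_d_nonneg d) (Finset.sum_nonneg fun c _ => mul_star_self_nonneg _)

lemma dC_ne_zero (d : ℕ) [NeZero d] : (d:ℂ) ≠ 0 := Nat.cast_ne_zero.mpr (NeZero.ne d)

lemma margA (d : ℕ) [NeZero d] (φ : ZMod d × ZMod d → ℂ) (Λ : ZMod d → ℝ)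
    (hdiag : ∀ m : ZMod d, rho d φ m m = (Λ (-m) : ℂ)) (j : ZMod d) :
    ∑ k : ZMod d, Cme d φ j k = ∑ i : ZMod d, (Λ (j - i) : ℂ) • Aob d i := by
  ext a b
  rw [Matrix.sum_apply, Matrix.sum_apply]
  have hL : ∀ k : ZMod d, Cme d φ j k a b
      = ((1/(d:ℂ)) * rho d φ (a-j) (b-j)) * chi d (k*(a-b)) := fun k => by
    rw [Cme]; ring
  rw [Finset.sum_congr rfl (fun k _ => hL k), ← Finset.mul_sum, sum_chi]
  have hR : ∀ i : ZMod d, ((Λ (j - i) : ℂ) • Aob d i) a b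
      = (if a = i then 1 else 0) * (if b = i then 1 else 0) * (Λ (j - i) : ℂ) := fun i => by
    rw [Matrix.smul_apply, Aob_apply, smul_eq_mul]; ring
  rw [Finset.sum_congr rfl (fun i _ => hR i)]
  by_cases hab : a = b
  · subst hab
    rw [sub_self, if_pos rfl]
    simp only [ite_mul, one_mul, zero_mul, Finset.sum_ite_eq', Finset.mem_univ, if_true, Finset.sum_ite_eq, ite_true]
    rw [hdiag, neg_sub]
    field_simp [dC_ne_zero d]
  · rw [if_neg (sub_ne_zero.mpr hab), mul_zero]
    rw [Finset.sum_eq_zero]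
    intro i _
    by_cases hai : a = i
    · subst hai
      rw [if_pos rfl, if_neg (fun h : b = a => hab h.symm)]; ring
    · rw [if_neg hai]; ring

lemma margB (d : ℕ) [NeZero d] (φ : ZMod d × ZMod d → ℂ) (Γ : ZMod d → ℝ)
    (hB : ∀ m : ZMod d,
      (1/(d:ℂ)) * ∑ p : ZMod d, ∑ q : ZMod d, chi d (m*(q-p)) * rho d φ q p = (Γ m : ℂ))
    (k : ZMod d) :
    ∑ j : ZMod d, Cme d φ j k = ∑ i : ZMod d, (Γ (k - i) : ℂ) • Bob d i := by
  ext a b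
  rw [Matrix.sum_apply, Matrix.sum_apply]
  have hd := dC_ne_zero d
  -- LHS = (1/d) * chi d (k*(a-b)) * ∑ p, rho (p+(a-b)) p
  have hLHS : ∑ j : ZMod d, Cme d φ j k a b
      = (1/(d:ℂ)) * chi d (k*(a-b)) * ∑ p : ZMod d, rho d φ (p+(a-b)) p := by
    rw [Finset.mul_sum]
    refine Fintype.sum_equiv (Equiv.subLeft b) _ _ fun j => ?_
    rw [Cme]
    have h1 : b - j + (a - b) = a - j := by ring
    have h2 : (Equiv.subLeft b) j = b - j := rfl
    rw [h2, h1]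
  rw [hLHS]
  -- RHS
  have hRHS : ∀ i : ZMod d, ((Γ (k - i) : ℂ) • Bob d i) a b
      = (Γ (k - i) : ℂ) * ((1/(d:ℂ)) * chi d (i*(a-b))) := fun i => by
    rw [Matrix.smul_apply, Bob_apply, smul_eq_mul]
  rw [Finset.sum_congr rfl (fun i _ => hRHS i)]
  -- substitute hB
  have step1 : ∀ i : ZMod d, (Γ (k - i) : ℂ) * ((1/(d:ℂ)) * chi d (i*(a-b)))
      = ∑ p : ZMod d, ∑ q : ZMod d,
          ((1/(d:ℂ)) * (1/(d:ℂ))) * (chi d (k*(q-p)) * chi d (i*((a-b)-(q-p)))) * rho d φ q p := by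
    intro i
    rw [← hB (k - i), Finset.mul_sum, Finset.sum_mul]
    refine Finset.sum_congr rfl fun p _ => ?_
    rw [Finset.mul_sum, Finset.sum_mul]
    refine Finset.sum_congr rfl fun q _ => ?_
    have hx : chi d ((k-i)*(q-p)) * chi d (i*(a-b))
        = chi d (k*(q-p)) * chi d (i*((a-b)-(q-p))) := by
      rw [← chi_add, ← chi_add]; congr 1; ring
    linear_combination ((1/(d:ℂ)) * (1/(d:ℂ)) * rho d φ q p) * hx
  rw [Finset.sum_congr rfl (fun i _ => step1 i)]
  -- swap sums: i outside -> innermost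
  rw [Finset.sum_comm]
  refine Eq.symm ?_
  rw [Finset.mul_sum]
  refine Finset.sum_congr rfl fun p _ => ?_
  rw [Finset.sum_comm]
  have inner : ∀ q : ZMod d,
      ∑ i : ZMod d, ((1/(d:ℂ)) * (1/(d:ℂ))) * (chi d (k*(q-p)) * chi d (i*((a-b)-(q-p)))) * rho d φ q p
      = if q = p + (a-b) then (d:ℂ) * ((1/(d:ℂ)) * (1/(d:ℂ))) * chi d (k*(a-b)) * rho d φ q p else 0 := by
    intro q
    have factor : ∀ i : ZMod d,
        ((1/(d:ℂ)) * (1/(d:ℂ))) * (chi d (k*(q-p)) * chi d (i*((a-b)-(q-p)))) * rho d φ q p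
        = (((1/(d:ℂ)) * (1/(d:ℂ))) * chi d (k*(q-p)) * rho d φ q p) * chi d (i*((a-b)-(q-p))) :=
      fun i => by ring
    rw [Finset.sum_congr rfl (fun i _ => factor i), ← Finset.mul_sum, sum_chi]
    by_cases hq : q = p + (a - b)
    · rw [if_pos (by rw [hq]; ring), if_pos hq, hq]
      have : p + (a-b) - p = a - b := by ring
      rw [this]; ring
    · rw [if_neg (fun h => hq (by linear_combination -h)), if_neg hq, mul_zero]
  rw [Finset.sum_congr rfl (fun q _ => inner q), Finset.sum_ite_eq', if_pos (Finset.mem_univ _)]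
  field_simp

noncomputable def Wm (d : ℕ) [NeZero d] (x y : ZMod d) : Matrix (ZMod d) (ZMod d) ℂ :=
  fun p q => if p = q + x then chi d (y*q) else 0

noncomputable def rhoC (d : ℕ) [NeZero d]
    (C : ZMod d → ZMod d → Matrix (ZMod d) (ZMod d) ℂ) : Matrix (ZMod d) (ZMod d) ℂ :=
  fun a b => (1/(d:ℂ)) * ∑ x : ZMod d, ∑ y : ZMod d, chi d (y*(b-a)) * C x y (a+x) (b+x)

lemma conj_entry (d : ℕ) [NeZero d] (x y : ZMod d) (M : Matrix (ZMod d) (ZMod d) ℂ)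
    (a b : ZMod d) :
    ((Wm d x y)ᴴ * M * (Wm d x y)) a b = chi d (y*(b-a)) * M (a+x) (b+x) := by
  simp only [Matrix.mul_apply, conjTranspose_apply, Wm, ite_mul, zero_mul, mul_ite, mul_zero,
    apply_ite (star : ℂ → ℂ), star_zero, Finset.sum_ite_eq', Finset.mem_univ, if_true]
  rw [star_chi]
  have hx : chi d (-(y*a)) * chi d (y*b) = chi d (y*(b-a)) := by
    rw [← chi_add]; congr 1; ring
  linear_combination (M (a+x) (b+x)) * hx

lemma rhoC_eq (d : ℕ) [NeZero d] (C : ZMod d → ZMod d → Matrix (ZMod d) (ZMod d) ℂ) :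
    rhoC d C = (1/(d:ℂ)) • ∑ x : ZMod d, ∑ y : ZMod d, ((Wm d x y)ᴴ * (C x y) * (Wm d x y)) := by
  ext a b
  simp only [Matrix.smul_apply, Matrix.sum_apply, smul_eq_mul, rhoC]
  congr 1
  exact Finset.sum_congr rfl fun x _ => Finset.sum_congr rfl fun y _ =>
    (conj_entry d x y (C x y) a b).symm

lemma posSemidef_sum_zmod (d : ℕ) [NeZero d] (f : ZMod d → Matrix (ZMod d) (ZMod d) ℂ)
    (h : ∀ i, (f i).PosSemidef) : (∑ i : ZMod d, f i).PosSemidef :=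
  Finset.sum_induction f _ (fun _ _ ha hb => ha.add hb) Matrix.PosSemidef.zero (fun i _ => h i)

lemma rhoC_posSemidef (d : ℕ) [NeZero d] (C : ZMod d → ZMod d → Matrix (ZMod d) (ZMod d) ℂ)
    (hpsd : ∀ j k, (C j k).PosSemidef) : (rhoC d C).PosSemidef := by
  rw [rhoC_eq]
  have hsum : (∑ x : ZMod d, ∑ y : ZMod d, ((Wm d x y)ᴴ * (C x y) * (Wm d x y))).PosSemidef :=
    posSemidef_sum_zmod d _ fun x => posSemidef_sum_zmod d _ fun y =>
      (hpsd x y).conjTranspose_mul_mul_same (Wm d x y)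
  refine .of_dotProduct_mulVec_nonneg ?_ ?_
  · show _ = _
    rw [conjTranspose_smul, hsum.1, star_one_div_d]
  · intro u
    rw [smul_mulVec, dotProduct_smul, smul_eq_mul]
    exact mul_nonneg (one_div_d_nonneg d) (hsum.dotProduct_mulVec_nonneg u)

lemma rhoC_diag (d : ℕ) [NeZero d] (C : ZMod d → ZMod d → Matrix (ZMod d) (ZMod d) ℂ)
    (Λ : ZMod d → ℝ)
    (hA : ∀ j, ∑ k : ZMod d, C j k = ∑ i : ZMod d, (Λ (j - i) : ℂ) • Aob d i) (m : ZMod d) :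
    rhoC d C m m = (Λ (-m) : ℂ) := by
  have hd := dC_ne_zero d
  rw [rhoC]
  have h1 : ∀ x : ZMod d, ∑ y : ZMod d, chi d (y*(m-m)) * C x y (m+x) (m+x) = (Λ (-m) : ℂ) := by
    intro x
    have e1 : ∀ y : ZMod d, chi d (y*(m-m)) * C x y (m+x) (m+x) = C x y (m+x) (m+x) := by
      intro y; rw [sub_self, mul_zero, chi_zero, one_mul]
    rw [Finset.sum_congr rfl (fun y _ => e1 y)]
    have h2 : (∑ k : ZMod d, C x k) (m+x) (m+x)
        = (∑ i : ZMod d, (Λ (x - i) : ℂ) • Aob d i) (m+x) (m+x) := by rw [hA x]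
    rw [Matrix.sum_apply, Matrix.sum_apply] at h2
    rw [h2]
    have e2 : ∀ i : ZMod d, ((Λ (x - i) : ℂ) • Aob d i) (m+x) (m+x)
        = if m + x = i then (Λ (x - i) : ℂ) else 0 := by
      intro i
      rw [Matrix.smul_apply, Aob_apply, smul_eq_mul]
      by_cases hmi : m + x = i
      · rw [if_pos hmi, if_pos hmi]; ring
      · rw [if_neg hmi, if_neg hmi]; ring
    rw [Finset.sum_congr rfl (fun i _ => e2 i), Finset.sum_ite_eq, if_pos (Finset.mem_univ _)]
    congr 1
    ring
  rw [Finset.sum_congr rfl (fun x _ => h1 x), Finset.sum_const, Finset.card_univ, ZMod.card]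
  rw [nsmul_eq_mul]
  field_simp

lemma sum_comm3 (d : ℕ) [NeZero d] (f : ZMod d → ZMod d → ZMod d → ℂ) :
    ∑ p : ZMod d, ∑ q : ZMod d, ∑ x : ZMod d, f p q x
      = ∑ x : ZMod d, ∑ p : ZMod d, ∑ q : ZMod d, f p q x :=
  (Finset.sum_congr rfl fun p _ => Finset.sum_comm).trans Finset.sum_comm

lemma rhoC_fdiag (d : ℕ) [NeZero d] (C : ZMod d → ZMod d → Matrix (ZMod d) (ZMod d) ℂ)
    (Γ : ZMod d → ℝ)
    (hB : ∀ k, ∑ j : ZMod d, C j k = ∑ i : ZMod d, (Γ (k - i) : ℂ) • Bob d i) (k : ZMod d) :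
    (1/(d:ℂ)) * ∑ p : ZMod d, ∑ q : ZMod d, chi d (k*(q-p)) * rhoC d C q p = (Γ k : ℂ) := by
  have hd := dC_ne_zero d
  -- step 1: expand rhoC and combine chis
  have e1 : ∀ p q : ZMod d, chi d (k*(q-p)) * rhoC d C q p
      = ∑ x : ZMod d, ∑ y : ZMod d,
          (1/(d:ℂ)) * (chi d ((k-y)*(q-p)) * C x y (q+x) (p+x)) := by
    intro p q
    rw [rhoC]
    simp only [Finset.mul_sum]
    refine Finset.sum_congr rfl fun x _ => Finset.sum_congr rfl fun y _ => ?_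
    have hx : chi d (k*(q-p)) * chi d (y*(p-q)) = chi d ((k-y)*(q-p)) := by
      rw [← chi_add]; congr 1; ring
    linear_combination ((1/(d:ℂ)) * C x y (q+x) (p+x)) * hx
  rw [Finset.sum_congr rfl (fun p _ => Finset.sum_congr rfl (fun q _ => e1 p q))]
  -- step 2: move x,y sums to the outside and reindex
  have swap1 : ∑ p : ZMod d, ∑ q : ZMod d, ∑ x : ZMod d, ∑ y : ZMod d,
        (1/(d:ℂ)) * (chi d ((k-y)*(q-p)) * C x y (q+x) (p+x))
      = ∑ x : ZMod d, ∑ y : ZMod d, ∑ p : ZMod d, ∑ q : ZMod d,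
        (1/(d:ℂ)) * (chi d ((k-y)*(q-p)) * C x y (q+x) (p+x)) := by
    rw [sum_comm3 d]
    exact Finset.sum_congr rfl fun x _ => sum_comm3 d _
  rw [swap1]
  have reidx : ∀ x y : ZMod d, ∑ p : ZMod d, ∑ q : ZMod d,
        (1/(d:ℂ)) * (chi d ((k-y)*(q-p)) * C x y (q+x) (p+x))
      = ∑ P : ZMod d, ∑ Q : ZMod d, (1/(d:ℂ)) * (chi d ((k-y)*(P-Q)) * C x y P Q) := by
    intro x y
    have inner : ∀ p : ZMod d, ∑ q : ZMod d,
          (1/(d:ℂ)) * (chi d ((k-y)*(q-p)) * C x y (q+x) (p+x))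
        = ∑ P : ZMod d, (1/(d:ℂ)) * (chi d ((k-y)*(P-(p+x))) * C x y P (p+x)) := by
      intro p
      refine Fintype.sum_equiv (Equiv.addRight x) _ _ fun q => ?_
      show (1/(d:ℂ)) * (chi d ((k-y)*(q-p)) * C x y (q+x) (p+x))
          = (1/(d:ℂ)) * (chi d ((k-y)*((q+x)-(p+x))) * C x y (q+x) (p+x))
      have harg : (k-y)*((q+x) - (p+x)) = (k-y)*(q-p) := by ring
      rw [harg]
    rw [Finset.sum_congr rfl (fun p _ => inner p)]
    rw [Finset.sum_comm]
    refine Finset.sum_congr rfl fun P _ => ?_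
    exact Fintype.sum_equiv (Equiv.addRight x) _ _ fun p => rfl
  rw [Finset.sum_congr rfl (fun x _ => Finset.sum_congr rfl (fun y _ => reidx x y))]
  -- step 3: bring x innermost and use the B-marginal
  rw [Finset.sum_comm]
  have step3 : ∀ y : ZMod d, ∑ x : ZMod d, ∑ P : ZMod d, ∑ Q : ZMod d,
        (1/(d:ℂ)) * (chi d ((k-y)*(P-Q)) * C x y P Q)
      = ∑ P : ZMod d, ∑ Q : ZMod d, ∑ i : ZMod d,
        ((1/(d:ℂ)) * (1/(d:ℂ))) * (Γ (y - i) : ℂ) * chi d ((k-y+i)*(P-Q)) := by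
    intro y
    have A : ∑ x : ZMod d, ∑ P : ZMod d, ∑ Q : ZMod d,
          (1/(d:ℂ)) * (chi d ((k-y)*(P-Q)) * C x y P Q)
        = ∑ P : ZMod d, ∑ Q : ZMod d, ∑ x : ZMod d,
          (1/(d:ℂ)) * (chi d ((k-y)*(P-Q)) * C x y P Q) :=
      (sum_comm3 d (fun P Q x => (1/(d:ℂ)) * (chi d ((k-y)*(P-Q)) * C x y P Q))).symm
    rw [A]
    refine Finset.sum_congr rfl fun P _ => Finset.sum_congr rfl fun Q _ => ?_
    have hsum : ∑ x : ZMod d, C x y P Q = ∑ i : ZMod d, (Γ (y - i) : ℂ) * ((1/(d:ℂ)) * chi d (i*(P-Q))) := by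
      have h2 : (∑ j : ZMod d, C j y) P Q = (∑ i : ZMod d, (Γ (y - i) : ℂ) • Bob d i) P Q := by
        rw [hB y]
      rw [Matrix.sum_apply, Matrix.sum_apply] at h2
      rw [h2]
      exact Finset.sum_congr rfl fun i _ => by rw [Matrix.smul_apply, Bob_apply, smul_eq_mul]
    have factor : ∑ x : ZMod d, (1/(d:ℂ)) * (chi d ((k-y)*(P-Q)) * C x y P Q)
        = ((1/(d:ℂ)) * chi d ((k-y)*(P-Q))) * ∑ x : ZMod d, C x y P Q := by
      rw [Finset.mul_sum]
      exact Finset.sum_congr rfl fun x _ => by ring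
    rw [factor, hsum, Finset.mul_sum]
    refine Finset.sum_congr rfl fun i _ => ?_
    have hx : chi d ((k-y)*(P-Q)) * chi d (i*(P-Q)) = chi d ((k-y+i)*(P-Q)) := by
      rw [← chi_add]; congr 1; ring
    linear_combination ((1/(d:ℂ)) * (1/(d:ℂ)) * (Γ (y - i) : ℂ)) * hx
  rw [Finset.sum_congr rfl (fun y _ => step3 y)]
  -- step 4: move i out and evaluate the chi sums
  have step4 : ∀ y : ZMod d, ∑ P : ZMod d, ∑ Q : ZMod d, ∑ i : ZMod d,
        ((1/(d:ℂ)) * (1/(d:ℂ))) * (Γ (y - i) : ℂ) * chi d ((k-y+i)*(P-Q))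
      = ∑ i : ZMod d, ∑ P : ZMod d, ∑ Q : ZMod d,
        ((1/(d:ℂ)) * (1/(d:ℂ))) * (Γ (y - i) : ℂ) * chi d ((k-y+i)*(P-Q)) := by
    intro y
    exact sum_comm3 d (fun P Q i =>
      ((1/(d:ℂ)) * (1/(d:ℂ))) * (Γ (y - i) : ℂ) * chi d ((k-y+i)*(P-Q)))
  rw [Finset.sum_congr rfl (fun y _ => step4 y)]
  have step5 : ∀ y i : ZMod d, ∑ P : ZMod d, ∑ Q : ZMod d,
        ((1/(d:ℂ)) * (1/(d:ℂ))) * (Γ (y - i) : ℂ) * chi d ((k-y+i)*(P-Q))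
      = if k-y+i = 0 then ((1/(d:ℂ)) * (1/(d:ℂ))) * (Γ (y - i) : ℂ) * ((d:ℂ) * (d:ℂ)) else 0 := by
    intro y i
    have hQ : ∀ P : ZMod d, ∑ Q : ZMod d, ((1/(d:ℂ)) * (1/(d:ℂ))) * (Γ (y - i) : ℂ) * chi d ((k-y+i)*(P-Q))
        = ((1/(d:ℂ)) * (1/(d:ℂ))) * (Γ (y - i) : ℂ) * (if k-y+i = 0 then (d:ℂ) else 0) := by
      intro P
      rw [← Finset.mul_sum]
      congr 1
      rw [← sum_chi d (k-y+i)]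
      refine Fintype.sum_equiv (Equiv.subLeft P) _ _ fun Q => ?_
      show chi d ((k-y+i)*(P-Q)) = chi d ((P-Q)*(k-y+i))
      rw [mul_comm]
    rw [Finset.sum_congr rfl (fun P _ => hQ P), Finset.sum_const, Finset.card_univ, ZMod.card,
      nsmul_eq_mul]
    by_cases hc : k-y+i = 0
    · rw [if_pos hc, if_pos hc]; ring
    · rw [if_neg hc, if_neg hc]; ring
  rw [Finset.sum_congr rfl (fun y _ => Finset.sum_congr rfl (fun i _ => step5 y i))]
  -- step 6: collapse the ite over i
  have step6 : ∀ y : ZMod d, ∑ i : ZMod d,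
        (if k-y+i = 0 then ((1/(d:ℂ)) * (1/(d:ℂ))) * (Γ (y - i) : ℂ) * ((d:ℂ) * (d:ℂ)) else 0)
      = (Γ k : ℂ) := by
    intro y
    have hcond : ∀ i : ZMod d, (k-y+i = 0) = (i = y-k) := by
      intro i
      apply propext
      constructor
      · intro h; linear_combination h
      · intro h; linear_combination h
    simp only [hcond]
    rw [Finset.sum_ite_eq', if_pos (Finset.mem_univ _)]
    have : y - (y - k) = k := by ring
    rw [this]
    field_simp
  rw [Finset.sum_congr rfl (fun y _ => step6 y), Finset.sum_const, Finset.card_univ, ZMod.card,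
    nsmul_eq_mul]
  field_simp

lemma bridgeA (d : ℕ) [NeZero d] (φ : ZMod d × ZMod d → ℂ) (j : ZMod d) :
    star φ ⬝ᵥ ((Aob d (-j) ⊗ₖ (1 : Matrix (ZMod d) (ZMod d) ℂ)) *ᵥ φ) = rho d φ (-j) (-j) := by
  rw [bridgeM]
  simp only [Aob_apply, ite_mul, mul_ite, one_mul, zero_mul, mul_one, mul_zero,
    Finset.sum_ite_eq', Finset.mem_univ, if_true]

lemma bridgeB (d : ℕ) [NeZero d] (φ : ZMod d × ZMod d → ℂ) (k : ZMod d) :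
    star φ ⬝ᵥ ((Bob d (-k) ⊗ₖ (1 : Matrix (ZMod d) (ZMod d) ℂ)) *ᵥ φ)
      = (1/(d:ℂ)) * ∑ p : ZMod d, ∑ q : ZMod d, chi d (k*(q-p)) * rho d φ q p := by
  rw [bridgeM, Finset.mul_sum]
  refine Finset.sum_congr rfl fun p _ => ?_
  rw [Finset.mul_sum]
  refine Finset.sum_congr rfl fun q _ => ?_
  rw [Bob_apply]
  have h : (-k) * (p - q) = k * (q - p) := by ring
  rw [h]
  ring

section
open scoped MatrixOrder
lemma exists_psd_sqrt_port {d : ℕ} [NeZero d] {M : Matrix (ZMod d) (ZMod d) ℂ}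
    (hM : M.PosSemidef) : ∃ S : Matrix (ZMod d) (ZMod d) ℂ, S.PosSemidef ∧ S * S = M :=
  ⟨CFC.sqrt M, (CFC.sqrt_nonneg M).posSemidef, CFC.sqrt_mul_sqrt_self M hM.nonneg⟩
end

theorem joint_measurability_iff_vector (d : ℕ) (hd : 2 ≤ d) [NeZero d]
    (Λ Γ : ZMod d → ℝ) (hΛpos : ∀ i, 0 ≤ Λ i) (hΛsum : ∑ i : ZMod d, Λ i = 1)
    (hΓpos : ∀ i, 0 ≤ Γ i) (hΓsum : ∑ i : ZMod d, Γ i = 1) :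
    (∃ C : ZMod d → ZMod d → Matrix (ZMod d) (ZMod d) ℂ,
        (∀ j k, (C j k).PosSemidef) ∧
        (∀ j, ∑ k : ZMod d, C j k = ∑ i : ZMod d, (Λ (j - i) : ℂ) • Aob d i) ∧
        (∀ k, ∑ j : ZMod d, C j k = ∑ i : ZMod d, (Γ (k - i) : ℂ) • Bob d i)) ↔
    (∃ φ : ZMod d × ZMod d → ℂ, star φ ⬝ᵥ φ = 1 ∧
        (∀ j : ZMod d,
          star φ ⬝ᵥ ((Aob d (-j) ⊗ₖ (1 : Matrix (ZMod d) (ZMod d) ℂ)).mulVec φ) = (Λ j : ℂ)) ∧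
        (∀ k : ZMod d,
          star φ ⬝ᵥ ((Bob d (-k) ⊗ₖ (1 : Matrix (ZMod d) (ZMod d) ℂ)).mulVec φ) = (Γ k : ℂ))) := by
  constructor
  · rintro ⟨C, hpsd, hA, hB⟩
    have hρ : (rhoC d C).PosSemidef := rhoC_posSemidef d C hpsd
    obtain ⟨S, hS, hSS⟩ := exists_psd_sqrt_port hρ
    have key : ∀ a b : ZMod d, rho d (fun p => S p.1 p.2) a b = rhoC d C a b := by
      intro a b
      have h1 : rho d (fun p => S p.1 p.2) a b = (S * Sᴴ) a b := by
        rw [Matrix.mul_apply]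
        exact Finset.sum_congr rfl fun c _ => by rw [conjTranspose_apply]
      rw [h1, hS.1, hSS]
    refine ⟨fun p => S p.1 p.2, ?_, ?_, ?_⟩
    · rw [bridgeN,
        Finset.sum_congr rfl (fun a _ => (key a a).trans (rhoC_diag d C Λ hA a))]
      have hre : ∑ a : ZMod d, Λ (-a) = 1 := by
        rw [← hΛsum]
        exact Fintype.sum_equiv (Equiv.neg (ZMod d)) _ _ fun a => rfl
      exact_mod_cast hre
    · intro j
      rw [bridgeA, key, rhoC_diag d C Λ hA, neg_neg]
    · intro k
      rw [bridgeB,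
        Finset.sum_congr rfl (fun p _ => Finset.sum_congr rfl (fun q _ =>
          congrArg (fun z => chi d (k*(q-p)) * z) (key q p)))]
      exact rhoC_fdiag d C Γ hB k
  · rintro ⟨φ, hnorm, hAv, hBv⟩
    have hdiag : ∀ m : ZMod d, rho d φ m m = (Λ (-m) : ℂ) := by
      intro m
      have := hAv (-m)
      rw [bridgeA] at this
      rw [neg_neg] at this
      exact this
    have hBd : ∀ m : ZMod d,
        (1/(d:ℂ)) * ∑ p : ZMod d, ∑ q : ZMod d, chi d (m*(q-p)) * rho d φ q p = (Γ m : ℂ) := by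
      intro m
      have := hBv m
      rwa [bridgeB] at this
    exact ⟨Cme d φ, fun j k => Cme_posSemidef d φ j k,
      fun j => margA d φ Λ hdiag j, fun k => margB d φ Γ hBd k⟩
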